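/- Any action profile corresponding to the proposer-optimal stable match is a welfare-maximizing Nash equilibrium: if a* is an action profile with μ(a*) = μ* (the proposer-optimal stable match), then a* is a Nash equilibrium, and for every Nash equilibrium action profile a' the welfare satisfies Σ_{i=1}^n u_i(a*) ≥ Σ_{i=1}^n u_i(a'). -/

import Mathlib

set_option linter.unusedSectionVars false
/-- A two-sided matching market with proposers `P` and acceptors `A`.
`OP i` is proposer `i`'s preference function over `A ∪ {∅}` (where `none` is `∅`),
and `OA j` is acceptor `j`'s preference function over `P ∪ {∅}`. -/
structure Market (P A : Type) [Fintype P] [Fintype A] where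
  OP : P → Option A → ℝ
  OA : A → Option P → ℝ
  OP_inj : ∀ i, Function.Injective (OP i)
  OA_inj : ∀ j, Function.Injective (OA j)
  OP_none : ∀ i, OP i none = 0
  OA_none : ∀ j, OA j none = 0
  OP_pos : ∀ i j, 0 < OP i (some j)
  OA_pos : ∀ j i, 0 < OA j (some i)
  OP_le_one : ∀ i o, OP i o ≤ 1
  OA_le_one : ∀ j o, OA j o ≤ 1

/-- A match: each proposer gets a partner in `A ∪ {∅}`, each acceptor a partner
in `P ∪ {∅}`, consistently. -/
structure Matching (P A : Type) where
  μP : P → Option A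
  μA : A → Option P
  consistent : ∀ i j, μP i = some j ↔ μA j = some i

/-- A match is stable if there is no proposer–acceptor pair who strictly prefer
each other to their assigned partners. -/
def Stable {P A : Type} [Fintype P] [Fintype A] (M : Market P A) (μ : Matching P A) : Prop :=
  ¬ ∃ (i : P) (j : A), M.OP i (some j) > M.OP i (μ.μP i) ∧ M.OA j (some i) > M.OA j (μ.μA j)

variable {P A : Type} [Fintype P] [Fintype A] [DecidableEq P] [DecidableEq A]

/-- Given an action profile `a`, acceptor `j` accepts its most preferred
proposer among those proposing to it (if any). -/
noncomputable def accept (M : Market P A) (a : P → Option A) (j : A) : Option P :=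
  if h : (Finset.univ.filter fun i => a i = some j).Nonempty then
    some (Classical.choose
      ((Finset.univ.filter fun i => a i = some j).exists_max_image
        (fun i => M.OA j (some i)) h))
  else none

theorem accept_spec {M : Market P A} {a : P → Option A} {j : A} {i : P}
    (h : accept M a j = some i) :
    a i = some j ∧ ∀ i', a i' = some j → M.OA j (some i') ≤ M.OA j (some i) := by
  unfold accept at h
  split_ifs at h with hne
  · obtain ⟨hmem, hmax⟩ := Classical.choose_spec
      ((Finset.univ.filter fun i => a i = some j).exists_max_image
        (fun i => M.OA j (some i)) hne)
    have hi : Classical.choose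
        ((Finset.univ.filter fun i => a i = some j).exists_max_image
          (fun i => M.OA j (some i)) hne) = i := Option.some_injective _ h
    rw [hi] at hmem hmax
    refine ⟨by simpa using hmem, fun i' hi' => hmax i' (by simpa using hi')⟩

theorem accept_of_propose {M : Market P A} {a : P → Option A} {j : A} {i : P}
    (h : a i = some j) : ∃ i', accept M a j = some i' := by
  unfold accept
  have hne : (Finset.univ.filter fun i => a i = some j).Nonempty :=
    ⟨i, by simpa using h⟩
  rw [dif_pos hne]
  exact ⟨_, rfl⟩

/-- The match resulting from an action profile `a`. -/
noncomputable def matchOf (M : Market P A) (a : P → Option A) : Matching P A where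
  μP i := (a i).bind fun j => if accept M a j = some i then some j else none
  μA j := accept M a j
  consistent := by
    intro i j
    constructor
    · intro h
      rcases Option.bind_eq_some_iff.mp h with ⟨j', hj', hif⟩
      by_cases hc : accept M a j' = some i
      · rw [if_pos hc] at hif
        exact (Option.some_injective _ hif) ▸ hc
      · rw [if_neg hc] at hif
        exact absurd hif (by simp)
    · intro h
      have hai : a i = some j := (accept_spec h).1
      show (a i).bind _ = some j
      rw [hai]
      simp [h]

/-- The utility of proposer `i` under action profile `a`. -/
noncomputable def util (M : Market P A) (a : P → Option A) (i : P) : ℝ :=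
  M.OP i ((matchOf M a).μP i)

/-- Pure Nash equilibrium: no proposer can strictly increase its utility by a
unilateral deviation. -/
def IsNash (M : Market P A) (a : P → Option A) : Prop :=
  ∀ (i : P) (a' : Option A), util M (Function.update a i a') i ≤ util M a i

theorem OP_nonneg (M : Market P A) (i : P) (o : Option A) : 0 ≤ M.OP i o := by
  cases o with
  | none => rw [M.OP_none]
  | some j => exact (M.OP_pos i j).le

theorem util_eq (M : Market P A) (a : P → Option A) (i : P) :
    util M a i = M.OP i ((a i).bind fun j => if accept M a j = some i then some j else none) :=
  rfl

theorem matchOf_μA (M : Market P A) (a : P → Option A) (j : A) :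
    (matchOf M a).μA j = accept M a j := rfl

/-- If a unilateral deviation strictly improves `i`'s utility, there is a
blocking pair against the current match. -/
theorem deviation_blocking (M : Market P A) (a : P → Option A) (i : P) (o : Option A)
    (h : util M a i < util M (Function.update a i o) i) :
    ∃ j, M.OP i (some j) > M.OP i ((matchOf M a).μP i) ∧
      M.OA j (some i) > M.OA j ((matchOf M a).μA j) := by
  set a' := Function.update a i o with ha'
  have hpos : 0 < util M a' i := lt_of_le_of_lt (OP_nonneg M i _) h
  rw [util_eq] at hpos
  -- the new partner must be some j
  obtain ⟨j, hj⟩ := Option.ne_none_iff_exists'.mp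
    (fun hn : ((a' i).bind fun j => if accept M a' j = some i then some j else none) = none => by
      rw [hn, M.OP_none] at hpos; exact lt_irrefl 0 hpos)
  rcases Option.bind_eq_some_iff.mp hj with ⟨j', hj', hif⟩
  have hacc : accept M a' j' = some i := by
    by_contra hc
    rw [if_neg hc] at hif; exact absurd hif (by simp)
  rw [if_pos hacc] at hif
  obtain rfl : j = j' := (Option.some.inj hif).symm
  refine ⟨j, ?_, ?_⟩
  · have := h
    rw [util_eq, util_eq, hj'] at this
    simp [hacc] at this; exact this
  · rw [matchOf_μA]
    rcases h0 : accept M a j with _ | i0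
    · rw [M.OA_none]; exact M.OA_pos j i
    · have hspec0 := accept_spec h0
      have hspec' := accept_spec hacc
      have hne : i0 ≠ i := by
        intro hE
        have hμ : (matchOf M a).μP i = some j :=
          ((matchOf M a).consistent i j).mpr (hE ▸ h0)
        have hc : util M a' i = M.OP i (some j) := by rw [util_eq, hj]
        have hc2 : util M a i = M.OP i (some j) := by simp only [util, hμ]
        rw [hc, hc2] at h
        exact lt_irrefl _ h
      have ha0 : a' i0 = some j := by
        rw [ha', Function.update_of_ne hne]; exact hspec0.1
      have hle : M.OA j (some i0) ≤ M.OA j (some i) := hspec'.2 i0 ha0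
      rcases lt_or_eq_of_le hle with hlt | heq
      · exact hlt
      · exact absurd (M.OA_inj j heq) (by simpa using hne)

/-- The match of a Nash equilibrium profile is stable. -/
theorem nash_stable (M : Market P A) (a : P → Option A) (hN : IsNash M a) :
    Stable M (matchOf M a) := by
  rintro ⟨i, j, h1, h2⟩
  set a' := Function.update a i (some j) with ha'
  have hacc : accept M a' j = some i := by
    have hi' : a' i = some j := by rw [ha', Function.update_self]
    obtain ⟨i1, h1'⟩ := accept_of_propose (M := M) hi'
    have hspec := accept_spec h1'
    have hi1 : i1 = i := by
      by_contra hne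
      have ha1 : a i1 = some j := by
        rw [ha', Function.update_of_ne hne] at hspec; exact hspec.1
      obtain ⟨i0, h0⟩ := accept_of_propose (M := M) ha1
      have hspec0 := accept_spec h0
      have hA : (matchOf M a).μA j = some i0 := h0
      rw [hA] at h2
      have : M.OA j (some i) ≤ M.OA j (some i1) := hspec.2 i hi'
      have : M.OA j (some i1) ≤ M.OA j (some i0) := hspec0.2 i1 ha1
      linarith [hspec.2 i hi', hspec0.2 i1 ha1]
    rw [hi1] at h1'; exact h1'
  have hutil : util M a' i = M.OP i (some j) := by
    rw [util_eq]
    have : a' i = some j := by rw [ha', Function.update_self]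
    rw [this]
    simp [hacc]
  have := hN i (some j)
  rw [← ha', hutil, util] at this
  linarith

/-- Any action profile realizing the proposer-optimal stable match is a
welfare-maximizing Nash equilibrium. -/
theorem posm_profile_is_welfare_maximizing_nash [Nonempty P] [Nonempty A]
    (M : Market P A) (μstar : Matching P A)
    (hstable : Stable M μstar)
    (hopt : ∀ μ' : Matching P A, Stable M μ' →
      ∀ i : P, M.OP i (μ'.μP i) ≤ M.OP i (μstar.μP i))
    (astar : P → Option A) (hastar : matchOf M astar = μstar) :
    IsNash M astar ∧
      ∀ a' : P → Option A, IsNash M a' →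
        ∑ i : P, util M a' i ≤ ∑ i : P, util M astar i := by
  constructor
  · intro i o
    by_contra hlt
    push_neg at hlt
    obtain ⟨j, hb1, hb2⟩ := deviation_blocking M astar i o hlt
    rw [hastar] at hb1 hb2
    exact hstable ⟨i, j, hb1, hb2⟩
  · intro a' hN
    apply Finset.sum_le_sum
    intro i _
    have hs := nash_stable M a' hN
    have := hopt (matchOf M a') hs i
    rw [util, util, hastar]
    exact this
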